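/- The function H(b) = (1/2) Σ_{k=1}^{I+J} e^{2b_k} + Σ_{i=1}^I Σ_{j=1}^J Π_{ij} e^{b_i + b_{I+j}} on ℝ^{I+J} is strictly convex whenever all entries Π_{ij} are nonnegative; indeed its Hessian at any point b dominates the positive diagonal matrix diag(2e^{2b_1}, ..., 2e^{2b_{I+J}}) in the Loewner order. -/

import Mathlib

open Finset Real

section general
variable {n : ℕ} {ι : Type*} [Fintype ι]

noncomputable def Lf (u : Fin n → ℝ) : (Fin n → ℝ) →L[ℝ] ℝ :=
  ∑ k, u k • (ContinuousLinearMap.proj k : (Fin n → ℝ) →L[ℝ] ℝ)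

lemma Lf_apply (u : Fin n → ℝ) (b : Fin n → ℝ) : Lf u b = ∑ k, u k * b k := by
  simp [Lf, ContinuousLinearMap.sum_apply]

lemma Lf_single (u : Fin n → ℝ) (k : Fin n) : Lf u (Pi.single k 1) = u k := by
  rw [Lf_apply]
  simp [Pi.single_apply]

noncomputable def Ff (c : ι → ℝ) (u : ι → Fin n → ℝ) : (Fin n → ℝ) → ℝ :=
  fun b => ∑ t, c t * Real.exp (Lf (u t) b)

lemma hasFDerivAt_Ff (c : ι → ℝ) (u : ι → Fin n → ℝ) (b : Fin n → ℝ) :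
    HasFDerivAt (Ff c u) (∑ t, (c t * Real.exp (Lf (u t) b)) • Lf (u t)) b := by
  apply HasFDerivAt.fun_sum
  intro t _
  have h1 : HasFDerivAt (fun b => Real.exp (Lf (u t) b))
      (Real.exp (Lf (u t) b) • Lf (u t)) b := (Lf (u t)).hasFDerivAt.exp
  have := h1.const_mul (c t)
  rw [smul_smul] at this; exact this

lemma fderiv_Ff (c : ι → ℝ) (u : ι → Fin n → ℝ) :
    fderiv ℝ (Ff c u) = fun b => ∑ t, (c t * Real.exp (Lf (u t) b)) • Lf (u t) := by
  funext b; exact (hasFDerivAt_Ff c u b).fderiv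

lemma hasFDerivAt_fderiv_Ff (c : ι → ℝ) (u : ι → Fin n → ℝ) (b : Fin n → ℝ) :
    HasFDerivAt (fun b => ∑ t, (c t * Real.exp (Lf (u t) b)) • Lf (u t))
      (∑ t, ((c t * Real.exp (Lf (u t) b)) • Lf (u t)).smulRight (Lf (u t))) b := by
  apply HasFDerivAt.fun_sum
  intro t _
  have h1 : HasFDerivAt (fun b => c t * Real.exp (Lf (u t) b))
      ((c t * Real.exp (Lf (u t) b)) • Lf (u t)) b := by
    have := (((Lf (u t)).hasFDerivAt (x := b)).exp).const_mul (c t)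
    rw [smul_smul] at this; exact this
  exact h1.smul_const (Lf (u t))

lemma iteratedFDeriv_two_Ff (c : ι → ℝ) (u : ι → Fin n → ℝ) (b v w : Fin n → ℝ) :
    iteratedFDeriv ℝ 2 (Ff c u) b ![v, w]
      = ∑ t, c t * Real.exp (Lf (u t) b) * (Lf (u t) v * Lf (u t) w) := by
  rw [iteratedFDeriv_two_apply, fderiv_Ff, (hasFDerivAt_fderiv_Ff c u b).fderiv]
  simp [ContinuousLinearMap.sum_apply, ContinuousLinearMap.smulRight_apply,
    smul_eq_mul, mul_assoc]

lemma posSemidef_sum_outer (a : ι → ℝ) (ha : ∀ t, 0 ≤ a t) (w : ι → Fin n → ℝ) :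
    Matrix.PosSemidef (Matrix.of fun k l : Fin n => ∑ t, a t * (w t k * w t l)) := by
  rw [Matrix.posSemidef_iff_dotProduct_mulVec]
  constructor
  · ext k l
    simp only [Matrix.conjTranspose_apply, Matrix.of_apply, star_trivial]
    exact Finset.sum_congr rfl fun t _ => by ring
  · intro x
    simp only [dotProduct, Matrix.mulVec, Matrix.of_apply, star_trivial,
      Pi.star_apply]
    have h1 : ∀ k, x k * ∑ l, (∑ t, a t * (w t k * w t l)) * x l
        = ∑ t, ∑ l, a t * (w t k * x k) * (w t l * x l) := by
      intro k
      rw [Finset.mul_sum]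
      calc ∑ l, x k * ((∑ t, a t * (w t k * w t l)) * x l)
          = ∑ l, ∑ t, a t * (w t k * x k) * (w t l * x l) := by
            refine Finset.sum_congr rfl fun l _ => ?_
            rw [Finset.sum_mul, Finset.mul_sum]
            exact Finset.sum_congr rfl fun t _ => by ring
        _ = ∑ t, ∑ l, a t * (w t k * x k) * (w t l * x l) := Finset.sum_comm
    have key : ∑ k, x k * ∑ l, (∑ t, a t * (w t k * w t l)) * x l
        = ∑ t, a t * ((∑ k, w t k * x k) * (∑ k, w t k * x k)) := by
      calc ∑ k, x k * ∑ l, (∑ t, a t * (w t k * w t l)) * x l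
          = ∑ k, ∑ t, ∑ l, a t * (w t k * x k) * (w t l * x l) :=
            Finset.sum_congr rfl fun k _ => h1 k
        _ = ∑ t, ∑ k, ∑ l, a t * (w t k * x k) * (w t l * x l) := Finset.sum_comm
        _ = ∑ t, a t * ((∑ k, w t k * x k) * (∑ k, w t k * x k)) := by
            refine Finset.sum_congr rfl fun t _ => ?_
            rw [Finset.sum_mul_sum, Finset.mul_sum]
            refine Finset.sum_congr rfl fun k _ => ?_
            rw [Finset.mul_sum]
            exact Finset.sum_congr rfl fun l _ => by ring
    rw [key]
    exact Finset.sum_nonneg fun t _ => mul_nonneg (ha t) (mul_self_nonneg _)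
end general
noncomputable def cfun (I J : ℕ) (P : Fin I → Fin J → ℝ) : (Fin (I+J) ⊕ Fin I × Fin J) → ℝ :=
  Sum.elim (fun _ => 1/2) fun p => P p.1 p.2

noncomputable def ufun (I J : ℕ) : (Fin (I+J) ⊕ Fin I × Fin J) → Fin (I+J) → ℝ :=
  Sum.elim (fun m k => if k = m then 2 else 0)
    fun p k => (if k = Fin.castAdd J p.1 then 1 else 0) + (if k = Fin.natAdd I p.2 then 1 else 0)

lemma Lf_ufun_inl (I J : ℕ) (m : Fin (I+J)) (b : Fin (I+J) → ℝ) :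
    Lf (ufun I J (Sum.inl m)) b = 2 * b m := by
  rw [Lf_apply]; simp [ufun, ite_mul]

lemma Lf_ufun_inr (I J : ℕ) (p : Fin I × Fin J) (b : Fin (I+J) → ℝ) :
    Lf (ufun I J (Sum.inr p)) b = b (Fin.castAdd J p.1) + b (Fin.natAdd I p.2) := by
  rw [Lf_apply]
  simp [ufun, add_mul, Finset.sum_add_distrib, ite_mul]

lemma entry_eq (I J : ℕ) (P : Fin I → Fin J → ℝ) (b : Fin (I+J) → ℝ) (k l : Fin (I+J)) :
    iteratedFDeriv ℝ 2 (Ff (cfun I J P) (ufun I J)) b ![Pi.single k 1, Pi.single l 1]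
      - Matrix.diagonal (fun k => 2 * Real.exp (2 * b k)) k l
    = ∑ p : Fin I × Fin J,
        (P p.1 p.2 * Real.exp (b (Fin.castAdd J p.1) + b (Fin.natAdd I p.2)))
          * (ufun I J (Sum.inr p) k * ufun I J (Sum.inr p) l) := by
  rw [iteratedFDeriv_two_Ff]
  simp only [Lf_single, Fintype.sum_sum_type, cfun, Sum.elim_inl, Sum.elim_inr,
    Lf_ufun_inl, Lf_ufun_inr, Matrix.diagonal_apply]
  have hdiag : ∑ m : Fin (I+J), 1/2 * Real.exp (2 * b m)
        * (ufun I J (Sum.inl m) k * ufun I J (Sum.inl m) l)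
      = if k = l then 2 * Real.exp (2 * b k) else 0 := by
    by_cases h : k = l
    · subst h
      simp [ufun, mul_ite, ite_mul]
      ring
    · simp only [h, if_false]
      apply Finset.sum_eq_zero
      intro m _
      by_cases hk : k = m
      · have hl : l ≠ m := fun hl => h (hk.trans hl.symm)
        simp [ufun, hk, hl]
      · simp [ufun, hk]
  rw [hdiag]
  ring

set_option maxHeartbeats 1000000 in
theorem H_strictConvex_and_hessian_dominates (I J : ℕ) (hI : 0 < I) (hJ : 0 < J)
    (P : Fin I → Fin J → ℝ) (hP : ∀ i j, 0 ≤ P i j) :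
    let H : (Fin (I + J) → ℝ) → ℝ := fun b =>
      (1 / 2) * ∑ k, Real.exp (2 * b k) +
        ∑ i : Fin I, ∑ j : Fin J,
          P i j * Real.exp (b (Fin.castAdd J i) + b (Fin.natAdd I j));
    StrictConvexOn ℝ Set.univ H ∧
    ∀ b : Fin (I + J) → ℝ,
      Matrix.PosSemidef
        ((Matrix.of fun k l : Fin (I + J) =>
            iteratedFDeriv ℝ 2 H b ![Pi.single k 1, Pi.single l 1]) -
          Matrix.diagonal (fun k => 2 * Real.exp (2 * b k))) := by
  intro H
  have hHF : H = Ff (cfun I J P) (ufun I J) := by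
    funext b
    show (1 / 2) * ∑ k, Real.exp (2 * b k) +
        ∑ i : Fin I, ∑ j : Fin J,
          P i j * Real.exp (b (Fin.castAdd J i) + b (Fin.natAdd I j)) = _
    simp only [Ff, Fintype.sum_sum_type, cfun, Sum.elim_inl, Sum.elim_inr,
      Lf_ufun_inl, Lf_ufun_inr, Fintype.sum_prod_type, Finset.mul_sum]
  constructor
  · -- strict convexity
    refine ⟨convex_univ, fun x _ y _ hxy a e ha he hae => ?_⟩
    have hexp' : ∀ s t : ℝ, Real.exp (a*s + e*t) ≤ a * Real.exp s + e * Real.exp t := by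
      intro s t
      simpa [smul_eq_mul] using
        convexOn_exp.2 (Set.mem_univ s) (Set.mem_univ t) ha.le he.le hae
    have hexp : ∀ s t : ℝ, s ≠ t →
        Real.exp (a*s + e*t) < a * Real.exp s + e * Real.exp t := by
      intro s t hst
      simpa [smul_eq_mul] using
        strictConvexOn_exp.2 (Set.mem_univ s) (Set.mem_univ t) hst ha he hae
    obtain ⟨k0, hk0⟩ := Function.ne_iff.mp hxy
    show (1 / 2) * ∑ k, Real.exp (2 * (a • x + e • y) k) + _ < _
    simp only [Pi.add_apply, Pi.smul_apply, smul_eq_mul]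
    have hA : (1/2 : ℝ) * ∑ k, Real.exp (2*(a*x k + e*y k))
        < a * ((1/2) * ∑ k, Real.exp (2*x k)) + e * ((1/2) * ∑ k, Real.exp (2*y k)) := by
      have hsum : ∑ k, Real.exp (2*(a*x k + e*y k))
          < ∑ k, (a * Real.exp (2*x k) + e * Real.exp (2*y k)) := by
        apply Finset.sum_lt_sum
        · intro k _
          have h := hexp' (2*x k) (2*y k)
          have h2 : Real.exp (2*(a*x k + e*y k)) = Real.exp (a*(2*x k) + e*(2*y k)) :=
            congrArg Real.exp (by ring)
          rw [h2]; exact h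
        · refine ⟨k0, Finset.mem_univ k0, ?_⟩
          have h := hexp (2*x k0) (2*y k0) (by intro h; exact hk0 (by linarith))
          have h2 : Real.exp (2*(a*x k0 + e*y k0)) = Real.exp (a*(2*x k0) + e*(2*y k0)) :=
            congrArg Real.exp (by ring)
          rw [h2]; exact h
      calc (1/2 : ℝ) * ∑ k, Real.exp (2*(a*x k + e*y k))
          < (1/2) * ∑ k, (a * Real.exp (2*x k) + e * Real.exp (2*y k)) := by
            have : (0:ℝ) < 1/2 := by norm_num
            exact (mul_lt_mul_iff_right₀ this).mpr hsum
        _ = a * ((1/2) * ∑ k, Real.exp (2*x k)) + e * ((1/2) * ∑ k, Real.exp (2*y k)) := by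
            rw [Finset.sum_add_distrib, ← Finset.mul_sum, ← Finset.mul_sum]; ring
    have hB : ∑ i : Fin I, ∑ j : Fin J,
          P i j * Real.exp ((a*x (Fin.castAdd J i) + e*y (Fin.castAdd J i))
            + (a*x (Fin.natAdd I j) + e*y (Fin.natAdd I j)))
        ≤ a * (∑ i : Fin I, ∑ j : Fin J,
              P i j * Real.exp (x (Fin.castAdd J i) + x (Fin.natAdd I j)))
          + e * (∑ i : Fin I, ∑ j : Fin J,
              P i j * Real.exp (y (Fin.castAdd J i) + y (Fin.natAdd I j))) := by
      have hterm : ∀ (i : Fin I) (j : Fin J),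
          P i j * Real.exp ((a*x (Fin.castAdd J i) + e*y (Fin.castAdd J i))
            + (a*x (Fin.natAdd I j) + e*y (Fin.natAdd I j)))
          ≤ a * (P i j * Real.exp (x (Fin.castAdd J i) + x (Fin.natAdd I j)))
            + e * (P i j * Real.exp (y (Fin.castAdd J i) + y (Fin.natAdd I j))) := by
        intro i j
        have h := hexp' (x (Fin.castAdd J i) + x (Fin.natAdd I j))
          (y (Fin.castAdd J i) + y (Fin.natAdd I j))
        have h2 : Real.exp ((a*x (Fin.castAdd J i) + e*y (Fin.castAdd J i))
            + (a*x (Fin.natAdd I j) + e*y (Fin.natAdd I j)))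
            = Real.exp (a*(x (Fin.castAdd J i) + x (Fin.natAdd I j))
              + e*(y (Fin.castAdd J i) + y (Fin.natAdd I j))) :=
          congrArg Real.exp (by ring)
        rw [h2]
        calc P i j * Real.exp _ ≤ P i j * (a * Real.exp (x (Fin.castAdd J i) + x (Fin.natAdd I j))
              + e * Real.exp (y (Fin.castAdd J i) + y (Fin.natAdd I j))) :=
            mul_le_mul_of_nonneg_left h (hP i j)
          _ = _ := by ring
      calc ∑ i : Fin I, ∑ j : Fin J, P i j * Real.exp ((a*x (Fin.castAdd J i) + e*y (Fin.castAdd J i))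
            + (a*x (Fin.natAdd I j) + e*y (Fin.natAdd I j)))
          ≤ ∑ i : Fin I, ∑ j : Fin J,
            (a * (P i j * Real.exp (x (Fin.castAdd J i) + x (Fin.natAdd I j)))
              + e * (P i j * Real.exp (y (Fin.castAdd J i) + y (Fin.natAdd I j)))) :=
            Finset.sum_le_sum fun i _ => Finset.sum_le_sum fun j _ => hterm i j
        _ = _ := by
            simp only [Finset.sum_add_distrib, ← Finset.mul_sum]
      -- done
    calc (1/2 : ℝ) * ∑ k, Real.exp (2*(a*x k + e*y k))
          + ∑ i : Fin I, ∑ j : Fin J,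
            P i j * Real.exp ((a*x (Fin.castAdd J i) + e*y (Fin.castAdd J i))
              + (a*x (Fin.natAdd I j) + e*y (Fin.natAdd I j)))
        < (a * ((1/2) * ∑ k, Real.exp (2*x k)) + e * ((1/2) * ∑ k, Real.exp (2*y k)))
          + (a * (∑ i : Fin I, ∑ j : Fin J,
              P i j * Real.exp (x (Fin.castAdd J i) + x (Fin.natAdd I j)))
            + e * (∑ i : Fin I, ∑ j : Fin J,
              P i j * Real.exp (y (Fin.castAdd J i) + y (Fin.natAdd I j)))) :=
          add_lt_add_of_lt_of_le hA hB
      _ = a • H x + e • H y := by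
          have hHx : H x = (1/2) * ∑ k, Real.exp (2*x k) + ∑ i : Fin I, ∑ j : Fin J,
              P i j * Real.exp (x (Fin.castAdd J i) + x (Fin.natAdd I j)) := rfl
          have hHy : H y = (1/2) * ∑ k, Real.exp (2*y k) + ∑ i : Fin I, ∑ j : Fin J,
              P i j * Real.exp (y (Fin.castAdd J i) + y (Fin.natAdd I j)) := rfl
          rw [show a • H x + e • H y = a * H x + e * H y from rfl, hHx, hHy]
          ring
  · -- Hessian
    intro b
    have hmat : (Matrix.of fun k l : Fin (I + J) =>
          iteratedFDeriv ℝ 2 H b ![Pi.single k 1, Pi.single l 1]) -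
          Matrix.diagonal (fun k => 2 * Real.exp (2 * b k))
        = Matrix.of fun k l : Fin (I + J) =>
            ∑ p : Fin I × Fin J,
              (P p.1 p.2 * Real.exp (b (Fin.castAdd J p.1) + b (Fin.natAdd I p.2)))
                * (ufun I J (Sum.inr p) k * ufun I J (Sum.inr p) l) := by
      ext k l
      simp only [Matrix.sub_apply, Matrix.of_apply]
      rw [hHF]
      exact entry_eq I J P b k l
    rw [hmat]
    exact posSemidef_sum_outer
      (fun p : Fin I × Fin J =>
        P p.1 p.2 * Real.exp (b (Fin.castAdd J p.1) + b (Fin.natAdd I p.2)))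
      (fun p => mul_nonneg (hP p.1 p.2) (Real.exp_pos _).le)
      (fun p => ufun I J (Sum.inr p))
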